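/- arXiv:1610.04810 — 3 statements merged into one kernel-verified Lean document; each statement's English description precedes it below -/
import Mathlib

section
/- Let m and ω be integers with 1 ≤ m and m + 1 ≤ ω. Then an integer point (x, ω − 1) ∈ ℤ² lies in the convex hull of {(0,0), (m, ω), (m+1, ω)} in ℝ² if and only if x = m. In particular, (m, ω − 1) is the unique lattice point with second coordinate ω − 1 in the closed triangle with vertices (0,0), (m, ω), (m+1, ω). -/
/-- For integers `1 ≤ m` and `m + 1 ≤ ω`, an integer point
`(x, ω − 1)` lies in the convex hull of `{(0,0), (m, ω), (m+1, ω)}` in `ℝ²`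
if and only if `x = m`. -/
theorem unique_lattice_point_at_height (m ω : ℤ) (hm : 1 ≤ m) (hω : m + 1 ≤ ω)
    (x : ℤ) :
    ((x : ℝ), ((ω - 1 : ℤ) : ℝ)) ∈
        convexHull ℝ
          ({(0, 0), ((m : ℝ), (ω : ℝ)), (((m + 1 : ℤ) : ℝ), (ω : ℝ))} : Set (ℝ × ℝ)) ↔
      x = m := by
  have hm' : (1:ℝ) ≤ (m:ℝ) := by exact_mod_cast hm
  have hω' : (m:ℝ) + 1 ≤ (ω:ℝ) := by exact_mod_cast hω
  have hωpos : (0:ℝ) < (ω:ℝ) := by linarith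
  have hω1 : (0:ℝ) < (ω:ℝ) - 1 := by linarith
  rw [show ({(0, 0), ((m : ℝ), (ω : ℝ)), (((m + 1 : ℤ) : ℝ), (ω : ℝ))} : Set (ℝ × ℝ)) =
      insert ((0:ℝ),(0:ℝ)) {((m : ℝ), (ω : ℝ)), (((m + 1 : ℤ) : ℝ), (ω : ℝ))} from rfl,
    convexHull_insert (by simp), convexHull_pair]
  simp only [mem_convexJoin, Set.mem_singleton_iff]
  constructor
  · rintro ⟨p, rfl, z, hz, hmem⟩
    obtain ⟨a, b, ha, hb, hab, rfl⟩ := hz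
    obtain ⟨s, t, hs, ht, hst, heq⟩ := hmem
    have hx1 : (x:ℝ) = s * 0 + t * (a * m + b * ((m:ℝ)+1)) := by
      have := congrArg Prod.fst heq
      simpa [Prod.smul_mk] using this.symm
    have hy1 : ((ω:ℝ) - 1) = s * 0 + t * (a * ω + b * ω) := by
      have := congrArg Prod.snd heq
      push_cast at this
      simpa [Prod.smul_mk] using this.symm
    have hy2 : t * (ω:ℝ) = ω - 1 := by nlinarith [hy1]
    have hb1 : b ≤ 1 := by linarith
    -- x = t*(m + b), with t = (ω-1)/ω
    have hx2 : (x:ℝ) = t * ((m:ℝ) + b) := by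
      push_cast at hx1; nlinarith [hx1]
    have ht' : t = ((ω:ℝ) - 1)/ω := by field_simp at hy2 ⊢; linarith
    have hup : (x:ℝ) < (m:ℝ) + 1 := by
      rw [hx2, ht']
      rw [div_mul_eq_mul_div, div_lt_iff₀ hωpos]
      nlinarith
    have hlo : (m:ℝ) - 1 < (x:ℝ) := by
      rw [hx2, ht']
      rw [div_mul_eq_mul_div, lt_div_iff₀ hωpos]
      nlinarith
    have h1 : x < m + 1 := by exact_mod_cast hup
    have h2 : m - 1 < x := by exact_mod_cast hlo
    omega
  · intro hxm
    subst hxm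
    refine ⟨((0:ℝ),(0:ℝ)), rfl, ((x:ℝ) + (x:ℝ)/((ω:ℝ)-1), (ω:ℝ)), ?_, ?_⟩
    · refine ⟨1 - (x:ℝ)/((ω:ℝ)-1), (x:ℝ)/((ω:ℝ)-1), ?_, ?_, by ring, ?_⟩
      · have : (x:ℝ)/((ω:ℝ)-1) ≤ 1 := by
          rw [div_le_one hω1]; linarith
        linarith
      · positivity
      · push_cast
        simp [Prod.smul_mk, Prod.ext_iff]
        constructor <;> [skip; skip] <;> field_simp <;> ring
    · refine ⟨1/(ω:ℝ), ((ω:ℝ)-1)/(ω:ℝ), by positivity, by positivity, by field_simp; ring, ?_⟩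
      push_cast
      simp [Prod.smul_mk, Prod.ext_iff]
      constructor <;> field_simp <;> ring
end

section
/- Let a, b, c, d, k, m, ω be positive integers satisfying: d·a − b·c = 1; c + d = m + 1; a + b = ω + 1; k·c = m; k·a = ω − 1; and (m+1)·b − ω·d = 1. Then a = 3, b = 5, c = 1, d = 2, k = 2, m = 2, and ω = 7. -/
/-- The concluding arithmetic of the Berge-manifold
characterization: positive integers satisfying the listed relations must be
`a = 3`, `b = 5`, `c = 1`, `d = 2`, `k = 2`, `m = 2`, `ω = 7`. -/
theorem berge_arithmetic (a b c d k m ω : ℤ)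
    (ha : 0 < a) (hb : 0 < b) (hc : 0 < c) (hd : 0 < d)
    (hk : 0 < k) (hm : 0 < m) (hω : 0 < ω)
    (h1 : d * a - b * c = 1)
    (h2 : c + d = m + 1)
    (h3 : a + b = ω + 1)
    (h4 : k * c = m)
    (h5 : k * a = ω - 1)
    (h6 : (m + 1) * b - ω * d = 1) :
    a = 3 ∧ b = 5 ∧ c = 1 ∧ d = 2 ∧ k = 2 ∧ m = 2 ∧ ω = 7 := by
  have hd' : d = (k - 1) * c + 1 := by linear_combination h2 - h4
  have hb' : b = (k - 1) * a + 2 := by linear_combination h3 - h5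
  have ha' : a = 2 * c + 1 := by linear_combination h1 - a * hd' + c * hb'
  have hkey : (k - 1) * c = 1 := by
    linear_combination h6 + b * h4 - d * h5 - (k * c + 1) * hb' +
      (k * a + 1) * hd' + ha'
  have hk1 : 1 ≤ k - 1 := by nlinarith
  have hc1 : c = 1 := by nlinarith
  have hk2 : k = 2 := by nlinarith
  subst hc1 hk2
  refine ⟨?_, ?_, rfl, ?_, rfl, ?_, ?_⟩ <;> omega
end

section
/- Let n ≥ 1 and let b₁, …, bₙ and c₁, …, cₙ be positive integers. Define functions a, m : {1, …, 2n+1} → ℤ by a(1) = m(1) = 0 and, for each k = 1, …, n: a(2k) = a(2k−1) + bₖ, a(2k+1) = a(2k) + cₖ, m(2k) = m(2k−1) + 1, and m(2k+1) = m(2k) + 2cₖ − 1. Suppose i, j ∈ {1, …, 2n+1} and n_w, n_z are nonnegative integers, not both zero, such that a(i) − a(j) = n_z − n_w and m(i) − m(j) = 1 − 2n_w. Then either j = i + 1 and n_z = 0, or j = i − 1 and n_w = 0. -/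
/-- The arithmetic core of Lemma 2.4. With Alexander and Maslov
gradings `a, m` of a positive chain determined by the positive integers
`b k, c k`, the grading constraints of a Maslov index one disk force
`j = i + 1` with `n_z = 0` or `j = i − 1` with `n_w = 0`. -/
theorem positive_chain_grading_constraint (n : ℤ) (hn : 1 ≤ n)
    (b c : ℤ → ℤ) (hb : ∀ k, 1 ≤ k → k ≤ n → 0 < b k)
    (hc : ∀ k, 1 ≤ k → k ≤ n → 0 < c k)
    (a m : ℤ → ℤ) (ha1 : a 1 = 0) (hm1 : m 1 = 0)
    (haeven : ∀ k, 1 ≤ k → k ≤ n → a (2 * k) = a (2 * k - 1) + b k)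
    (haodd : ∀ k, 1 ≤ k → k ≤ n → a (2 * k + 1) = a (2 * k) + c k)
    (hmeven : ∀ k, 1 ≤ k → k ≤ n → m (2 * k) = m (2 * k - 1) + 1)
    (hmodd : ∀ k, 1 ≤ k → k ≤ n → m (2 * k + 1) = m (2 * k) + 2 * c k - 1)
    (i j : ℤ) (hi1 : 1 ≤ i) (hi2 : i ≤ 2 * n + 1) (hj1 : 1 ≤ j) (hj2 : j ≤ 2 * n + 1)
    (nw nz : ℤ) (hnw : 0 ≤ nw) (hnz : 0 ≤ nz) (hne : ¬(nw = 0 ∧ nz = 0))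
    (hA : a i - a j = nz - nw)
    (hM : m i - m j = 1 - 2 * nw) :
    (j = i + 1 ∧ nz = 0) ∨ (j = i - 1 ∧ nw = 0) := by
  -- Step lemma for m : it increases by at least 1 at each step.
  have hmstep : ∀ t : ℤ, 1 ≤ t → t ≤ 2 * n → m t + 1 ≤ m (t + 1) := by
    intro t ht1 ht2
    rcases Int.even_or_odd t with ⟨k, hk⟩ | ⟨k, hk⟩
    · -- t = k + k
      subst hk
      have hk1 : 1 ≤ k := by omega
      have hk2 : k ≤ n := by omega
      have h := hmodd k hk1 hk2
      have hck := hc k hk1 hk2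
      have e1 : (2:ℤ) * k = k + k := by ring
      rw [e1] at h
      linarith
    · -- t = 2k + 1
      subst hk
      have hk1 : 1 ≤ k + 1 := by omega
      have hk2 : k + 1 ≤ n := by omega
      have h := hmeven (k + 1) hk1 hk2
      have e1 : (2:ℤ) * (k + 1) = 2 * k + 1 + 1 := by ring
      have e2 : (2:ℤ) * k + 1 + 1 - 1 = 2 * k + 1 := by ring
      rw [e1, e2] at h
      linarith
  -- Step lemma for g := m - 2a : it decreases by at least 1 at each step.
  have hgstep : ∀ t : ℤ, 1 ≤ t → t ≤ 2 * n →
      m (t + 1) - 2 * a (t + 1) ≤ (m t - 2 * a t) - 1 := by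
    intro t ht1 ht2
    rcases Int.even_or_odd t with ⟨k, hk⟩ | ⟨k, hk⟩
    · subst hk
      have hk1 : 1 ≤ k := by omega
      have hk2 : k ≤ n := by omega
      have h1 := hmodd k hk1 hk2
      have h2 := haodd k hk1 hk2
      have e1 : (2:ℤ) * k = k + k := by ring
      rw [e1] at h1 h2
      linarith
    · subst hk
      have hk1 : 1 ≤ k + 1 := by omega
      have hk2 : k + 1 ≤ n := by omega
      have h1 := hmeven (k + 1) hk1 hk2
      have h2 := haeven (k + 1) hk1 hk2
      have hbk := hb (k + 1) hk1 hk2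
      have e1 : (2:ℤ) * (k + 1) = 2 * k + 1 + 1 := by ring
      have e2 : (2:ℤ) * k + 1 + 1 - 1 = 2 * k + 1 := by ring
      rw [e1, e2] at h1 h2
      linarith
  -- Monotonicity of m.
  have hmono : ∀ p q : ℤ, 1 ≤ p → p ≤ q → q ≤ 2 * n + 1 → q - p ≤ m q - m p := by
    intro p q hp hpq
    refine Int.le_induction (motive := fun q _ => q ≤ 2 * n + 1 → q - p ≤ m q - m p) ?_ ?_ q hpq
    · intro _; simp
    · intro q hq ih hq2
      have h2 := ih (by omega)
      have h3 := hmstep q (by omega) (by omega)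
      linarith
  -- Antitonicity of m - 2a.
  have hgmono : ∀ p q : ℤ, 1 ≤ p → p ≤ q → q ≤ 2 * n + 1 →
      q - p ≤ (m p - 2 * a p) - (m q - 2 * a q) := by
    intro p q hp hpq
    refine Int.le_induction
      (motive := fun q _ => q ≤ 2 * n + 1 → q - p ≤ (m p - 2 * a p) - (m q - 2 * a q)) ?_ ?_ q hpq
    · intro _; simp
    · intro q hq ih hq2
      have h2 := ih (by omega)
      have h3 := hgstep q (by omega) (by omega)
      linarith
  have hG : (m i - 2 * a i) - (m j - 2 * a j) = 1 - 2 * nz := by linarith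
  rcases eq_or_lt_of_le hnw with hw0 | hw1
  · -- nw = 0, so nz ≥ 1
    have hz1 : 1 ≤ nz := by omega
    have hji : j < i := by
      by_contra hcon
      push_neg at hcon
      have := hmono i j hi1 hcon hj2
      omega
    have := hmono j i hj1 (by omega) hi2
    right
    constructor
    · omega
    · omega
  · -- nw ≥ 1
    have hz0 : nz = 0 := by
      by_contra hzcon
      have hz1 : 1 ≤ nz := by omega
      have hij : i < j := by
        by_contra hcon
        push_neg at hcon
        have := hmono j i hj1 hcon hi2
        omega
      have := hgmono i j hi1 (by omega) hj2
      omega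
    have hij : i < j := by
      by_contra hcon
      push_neg at hcon
      have := hgmono j i hj1 hcon hi2
      omega
    have := hgmono i j hi1 (by omega) hj2
    left
    constructor
    · omega
    · exact hz0
end
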